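/- For every ps-context Γ (a context such that Γ ⊢_ps is derivable), the associated globular set V(Γ) of variables is ◁-linear: for all distinct variables a, b of Γ, either a ◁ b or b ◁ a, and no variable x satisfies x ◁ x. -/

import Mathlib

namespace CaTT

mutual
  /-- Terms of the theory `CaTT`: variables and the two coherence constructors
  `coh^op_{Γ,A}[γ]` and `coh_{Γ,A}[γ]`. -/
  inductive Tm : Type
    | var : ℕ → Tm
    | cohop : List (ℕ × Ty) → Ty → List (ℕ × Tm) → Tm
    | coh : List (ℕ × Ty) → Ty → List (ℕ × Tm) → Tm
  /-- Types of the theory `CaTT`: `Obj` and `Hom A t u`. -/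
  inductive Ty : Type
    | obj : Ty
    | hom : Ty → Tm → Tm → Ty
end

/-- Contexts (most recently declared variable first). -/
abbrev Ctx := List (ℕ × Ty)

/-- Substitutions (most recent assignment first). -/
abbrev Sub := List (ℕ × Tm)

/-- Action of a substitution on a variable. -/
def lookupSub (x : ℕ) : Sub → Tm
  | [] => .var x
  | (y, u) :: γ => if x = y then u else lookupSub x γ

mutual
  /-- Action of a substitution on a term. -/
  def Tm.sub : Tm → Sub → Tm
    | .var x, γ => lookupSub x γ
    | .cohop Γ A δ, γ => .cohop Γ A (Sub.comp δ γ)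
    | .coh Γ A δ, γ => .coh Γ A (Sub.comp δ γ)
  /-- Composition of substitutions. -/
  def Sub.comp : Sub → Sub → Sub
    | [], _ => []
    | (x, t) :: δ, γ => (x, Tm.sub t γ) :: Sub.comp δ γ
end

/-- Action of a substitution on a type. -/
def Ty.sub : Ty → Sub → Ty
  | .obj, _ => .obj
  | .hom A t u, γ => .hom (A.sub γ) (t.sub γ) (u.sub γ)

/-- The identity substitution of a context. -/
def idSub (Γ : Ctx) : Sub := Γ.map (fun p => (p.1, Tm.var p.1))

mutual
  /-- Free variables of a term. -/
  def Tm.vars : Tm → Set ℕ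
    | .var x => {x}
    | .cohop _ _ γ => Sub.vars γ
    | .coh _ _ γ => Sub.vars γ
  /-- Free variables of a substitution. -/
  def Sub.vars : Sub → Set ℕ
    | [] => ∅
    | (_, t) :: γ => Tm.vars t ∪ Sub.vars γ
end

/-- Free variables of a type. -/
def Ty.vars : Ty → Set ℕ
  | .obj => ∅
  | .hom A t u => A.vars ∪ t.vars ∪ u.vars

/-- The set of variables declared in a context. -/
def Ctx.domvars (Γ : Ctx) : Set ℕ := {x | ∃ A, (x, A) ∈ Γ}

/-- The dimension of a type, shifted so that `dimN Obj = 0`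
(the paper's dimension is `dimN - 1`). -/
def Ty.dimN : Ty → ℕ
  | .obj => 0
  | .hom A _ _ => A.dimN + 1

/-- The dimension of a context (the maximum of `dimN` of its types). -/
def ctxDim (Γ : Ctx) : ℕ := (Γ.map (fun p => p.2.dimN)).foldr max 0

/-- The `i`-source `∂⁻ᵢ` of a (ps-)context. -/
def bdm (i : ℕ) : Ctx → Ctx
  | f :: y :: Γ => if i ≤ y.2.dimN then bdm i Γ else f :: y :: bdm i Γ
  | Γ => Γ

/-- The `i`-target `∂⁺ᵢ` of a (ps-)context. -/
def bdp (i : ℕ) : Ctx → Ctx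
  | f :: y :: Γ =>
    if i + 1 ≤ y.2.dimN then bdp i Γ
    else if y.2.dimN = i then y :: (bdp i Γ).tail
    else f :: y :: bdp i Γ
  | Γ => Γ

/-- The source `∂⁻Γ` of a ps-context. -/
def srcCtx (Γ : Ctx) : Ctx := bdm (ctxDim Γ - 1) Γ

/-- The target `∂⁺Γ` of a ps-context. -/
def tgtCtx (Γ : Ctx) : Ctx := bdp (ctxDim Γ - 1) Γ

/-- The judgment `Γ ⊢ps x : A` recognizing ps-contexts, with dangling variable `x`. -/
inductive PsVar : Ctx → ℕ → Ty → Prop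
  | pss (x : ℕ) : PsVar [(x, .obj)] x .obj
  | pse {Γ : Ctx} {x : ℕ} {A : Ty} (y f : ℕ) :
      PsVar Γ x A → y ∉ Ctx.domvars Γ → f ∉ Ctx.domvars Γ → y ≠ f →
      PsVar ((f, .hom A (.var x) (.var y)) :: (y, A) :: Γ) f (.hom A (.var x) (.var y))
  | psd {Γ : Ctx} {f : ℕ} {A : Ty} {x y : ℕ} :
      PsVar Γ f (.hom A (.var x) (.var y)) → PsVar Γ y A

/-- The judgment `Γ ⊢ps`: `Γ` is a ps-context. -/
def PsDer (Γ : Ctx) : Prop := ∃ x, PsVar Γ x .obj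

mutual
  /-- Derivability of contexts in `CaTT`. -/
  inductive CtxDer : Ctx → Prop
    | nil : CtxDer []
    | ext {Γ : Ctx} {A : Ty} {x : ℕ} :
        CtxDer Γ → TyDer Γ A → x ∉ Ctx.domvars Γ → CtxDer ((x, A) :: Γ)
  /-- Derivability of types in `CaTT`. -/
  inductive TyDer : Ctx → Ty → Prop
    | obj {Γ : Ctx} : CtxDer Γ → TyDer Γ .obj
    | hom {Γ : Ctx} {A : Ty} {t u : Tm} :
        TyDer Γ A → TmDer Γ t A → TmDer Γ u A → TyDer Γ (.hom A t u)
  /-- Derivability of terms in `CaTT`, with the rules (var), (op) and (coh). -/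
  inductive TmDer : Ctx → Tm → Ty → Prop
    | var {Γ : Ctx} {x : ℕ} {A : Ty} : CtxDer Γ → (x, A) ∈ Γ → TmDer Γ (.var x) A
    | op {Γ : Ctx} {A : Ty} {t u : Tm} {Δ : Ctx} {γ : Sub} :
        PsDer Γ →
        TmDer (srcCtx Γ) t A → TmDer (tgtCtx Γ) u A →
        Tm.vars t ∪ Ty.vars A = Ctx.domvars (srcCtx Γ) →
        Tm.vars u ∪ Ty.vars A = Ctx.domvars (tgtCtx Γ) →
        SubDer Δ γ Γ →
        TmDer Δ (.cohop Γ (.hom A t u) γ) ((Ty.hom A t u).sub γ)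
    | coh {Γ : Ctx} {A : Ty} {t u : Tm} {Δ : Ctx} {γ : Sub} :
        PsDer Γ →
        TmDer Γ t A → TmDer Γ u A →
        Tm.vars t ∪ Ty.vars A = Ctx.domvars Γ →
        Tm.vars u ∪ Ty.vars A = Ctx.domvars Γ →
        SubDer Δ γ Γ →
        TmDer Δ (.coh Γ (.hom A t u) γ) ((Ty.hom A t u).sub γ)
  /-- Derivability of substitutions in `CaTT`. -/
  inductive SubDer : Ctx → Sub → Ctx → Prop
    | nil {Δ : Ctx} : CtxDer Δ → SubDer Δ [] []
    | cons {Δ : Ctx} {γ : Sub} {Γ : Ctx} {x : ℕ} {A : Ty} {t : Tm} :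
        SubDer Δ γ Γ → TyDer Γ A → x ∉ Ctx.domvars Γ → TmDer Δ t (A.sub γ) →
        SubDer Δ ((x, t) :: γ) ((x, A) :: Γ)
end

/-- The types `U_n` of the disk and sphere contexts. -/
def U : ℕ → Ty
  | 0 => .obj
  | n + 1 => .hom (U n) (.var (2 * n)) (.var (2 * n + 1))

/-- The sphere contexts; `SphC n` is the context `S^{n-1}` of the paper. -/
def SphC : ℕ → Ctx
  | 0 => []
  | n + 1 => (2 * n + 1, U n) :: (2 * n, U n) :: SphC n

/-- The disk contexts `D^n`. -/
def DiskC (n : ℕ) : Ctx := (2 * n, U n) :: SphC n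

/-- The characteristic substitution `χ_A : Γ → S^{dim A}` of a type. -/
def chiTy : Ty → Sub
  | .obj => []
  | .hom B t u => (2 * B.dimN + 1, u) :: (2 * B.dimN, t) :: chiTy B

/-- The characteristic substitution `χ_t : Γ → D^{dim A}` of a term `t` of type `A`. -/
def chiTm (t : Tm) (A : Ty) : Sub := (2 * A.dimN, t) :: chiTy A

end CaTT

namespace CaTT

/-- One step of the relation `◁` on the variables of a context: `x ◁ f` and `f ◁ y`
whenever `f : Hom A x y` is declared in `Γ`. -/
def TriStep (Γ : Ctx) (a b : ℕ) : Prop :=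
  ∃ (f : ℕ) (A : Ty) (t u : Tm), (f, Ty.hom A t u) ∈ Γ ∧
    ((t = .var a ∧ b = f) ∨ (a = f ∧ u = .var b))

/-- The relation `◁` on the variables of a context: transitive closure of
`s(x) ◁ x ◁ t(x)`. -/
def Tri (Γ : Ctx) : ℕ → ℕ → Prop := Relation.TransGen (TriStep Γ)

end CaTT


namespace CaTT

/-! ### A strict order on lists -/

def Before (L : List ℕ) (a b : ℕ) : Prop := ∃ l1 l2, L = l1 ++ a :: l2 ∧ b ∈ l2

lemma before_irrefl {L : List ℕ} (h : L.Nodup) (a : ℕ) : ¬ Before L a a := by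
  rintro ⟨l1, l2, rfl, ha⟩
  have := (List.nodup_append.mp h).2.1
  simp at this
  exact this.1 ha

lemma split_unique {b : ℕ} : ∀ {u1 v1 u2 v2 : List ℕ}, u1 ++ b :: u2 = v1 ++ b :: v2 →
    b ∉ u1 → b ∉ v1 → u2 = v2 := by
  intro u1
  induction u1 with
  | nil =>
    intro v1 u2 v2 h h1 h2
    cases v1 with
    | nil => simpa using h
    | cons x v1 =>
      simp at h
      exact absurd (h.1 ▸ List.mem_cons_self (a := x) (l := v1) : b ∈ x :: v1) (by simp_all)
  | cons x u1 ih =>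
    intro v1 u2 v2 h h1 h2
    cases v1 with
    | nil =>
      simp at h
      exact absurd (h.1 ▸ List.mem_cons_self (a := x) (l := u1) : b ∈ x :: u1) (by simp_all)
    | cons y v1 =>
      simp at h h1 h2
      exact ih h.2 h1.2 h2.2

lemma before_trans {L : List ℕ} (h : L.Nodup) {a b c : ℕ}
    (h1 : Before L a b) (h2 : Before L b c) : Before L a c := by
  obtain ⟨l1, l2, hL, hb⟩ := h1
  obtain ⟨m1, m2, hM, hc⟩ := h2
  obtain ⟨p, q, rfl⟩ := List.append_of_mem hb
  refine ⟨l1, p ++ b :: q, hL, ?_⟩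
  have heq : (l1 ++ a :: p) ++ b :: q = m1 ++ b :: m2 := by
    rw [hL] at hM; rw [← hM]; simp
  have hnd : ((l1 ++ a :: p) ++ b :: q).Nodup := by
    rw [hL] at h; simpa using h
  have hb1 : b ∉ l1 ++ a :: p := by
    have := (List.nodup_append'.mp hnd).2.2
    intro hmem; exact this hmem List.mem_cons_self
  have hb2 : b ∉ m1 := by
    rw [heq] at hnd
    have := (List.nodup_append'.mp hnd).2.2
    intro hmem; exact this hmem List.mem_cons_self
  have := split_unique heq hb1 hb2
  subst this
  simp [hc]

lemma before_total {L : List ℕ} {a b : ℕ} (ha : a ∈ L) (hb : b ∈ L) (hne : a ≠ b) :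
    Before L a b ∨ Before L b a := by
  induction L with
  | nil => simp at ha
  | cons x L ih =>
    rcases List.mem_cons.mp ha with rfl | ha'
    · left
      exact ⟨[], L, rfl, by
        rcases List.mem_cons.mp hb with h | h
        · exact absurd h.symm hne
        · exact h⟩
    · rcases List.mem_cons.mp hb with rfl | hb'
      · right; exact ⟨[], L, rfl, ha'⟩
      · rcases ih ha' hb' with ⟨l1, l2, hL, h⟩ | ⟨l1, l2, hL, h⟩
        · left; exact ⟨x :: l1, l2, by rw [hL]; rfl, h⟩
        · right; exact ⟨x :: l1, l2, by rw [hL]; rfl, h⟩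

lemma before_mono {L L' : List ℕ} (h : List.Sublist L L') {a b : ℕ} (hb : Before L a b) :
    Before L' a b := by
  induction h with
  | slnil => exact hb
  | cons x h ih =>
    obtain ⟨l1, l2, hL, hmem⟩ := ih hb
    exact ⟨x :: l1, l2, by rw [hL]; rfl, hmem⟩
  | cons_cons x h ih =>
    obtain ⟨l1, l2, hL, hmem⟩ := hb
    cases l1 with
    | nil =>
      simp at hL
      rcases hL with ⟨rfl, rfl⟩
      exact ⟨[], _, rfl, h.subset hmem⟩
    | cons y l1 =>
      simp at hL
      obtain ⟨h1, rfl⟩ := hL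
      subst h1
      obtain ⟨m1, m2, hL', hmem'⟩ := ih ⟨l1, l2, rfl, hmem⟩
      exact ⟨x :: m1, m2, by rw [hL']; rfl, hmem'⟩

lemma before_of_chain' {Q : ℕ → ℕ → Prop} (hQ : ∀ {x y z}, Q x y → Q y z → Q x z)
    {L : List ℕ} (h : List.Chain' Q L) {a b : ℕ} (hb : Before L a b) : Q a b := by
  obtain ⟨l1, l2, rfl, hmem⟩ := hb
  have h2 : List.Chain' Q (a :: l2) := (List.isChain_append.mp h).2.1
  clear h
  induction l2 generalizing a with
  | nil => simp at hmem
  | cons c l2 ih =>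
    have hac : Q a c := (List.isChain_cons_cons.mp h2).1
    rcases List.mem_cons.mp hmem with rfl | hmem'
    · exact hac
    · exact hQ hac (ih hmem' (List.isChain_cons_cons.mp h2).2)

/-! ### The invariant for ps-contexts -/

/-- The chain of iterated targets of the type `A`. -/
def ctail : Ty → List ℕ
  | .obj => []
  | .hom B _ (.var q) => q :: ctail B
  | .hom _ _ _ => []

lemma triStep_mono {Γ Γ' : Ctx} (h : ∀ e ∈ Γ, e ∈ Γ') {a b : ℕ} :
    TriStep Γ a b → TriStep Γ' a b := by
  rintro ⟨g, A, t, u, hm, hc⟩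
  exact ⟨g, A, t, u, h _ hm, hc⟩

lemma tri_mono {Γ Γ' : Ctx} (h : ∀ e ∈ Γ, e ∈ Γ') {a b : ℕ} :
    Tri Γ a b → Tri Γ' a b :=
  (Relation.TransGen.mono (fun a b => triStep_mono h (a := a) (b := b)) :
    Relation.TransGen (TriStep Γ) ≤ Relation.TransGen (TriStep Γ')) a b

/-- The main invariant for the induction over `PsVar`. -/
def Inv (Γ : Ctx) (z : ℕ) (C : Ty) : Prop :=
  (z, C) ∈ Γ ∧
  (∀ w B t q, (w, Ty.hom B t (.var q)) ∈ Γ → (q, B) ∈ Γ) ∧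
  ∃ L : List ℕ, L.Nodup ∧
    (∀ w, w ∈ Ctx.domvars Γ ↔ w ∈ L) ∧
    (∀ a b, TriStep Γ a b → Before L a b) ∧
    List.Chain' (Tri Γ) L ∧
    ∃ L1, L = L1 ++ z :: ctail C

lemma psVar_inv {Γ : Ctx} {z : ℕ} {C : Ty} (h : PsVar Γ z C) : Inv Γ z C := by
  induction h with
  | pss x =>
    refine ⟨by simp, ?_, [x], by simp, ?_, ?_, by unfold List.Chain'; simp, [], by simp [ctail]⟩
    · rintro w B t q hmem
      simp at hmem
    · intro w
      simp [Ctx.domvars]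
    · rintro a b ⟨g, A, t, u, hmem, hc⟩
      simp at hmem
  | @pse Γ x A y f hps hy hf hyf ih =>
    obtain ⟨hzC, h6, L0, hnd, hdom, hstep, hchain, L1, hL⟩ := ih
    set Γ' : Ctx := (f, .hom A (.var x) (.var y)) :: (y, A) :: Γ with hΓ'
    have hsubset : ∀ e ∈ Γ, e ∈ Γ' := fun e he => by simp [hΓ', he]
    set L2 := ctail A with hL2
    set newL : List ℕ := L1 ++ x :: f :: y :: L2 with hnewL
    have hperm : newL.Perm (f :: y :: L0) := by
      have p1 : newL.Perm (f :: (L1 ++ x :: y :: L2)) := by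
        have := List.perm_middle (a := f) (l₁ := L1 ++ [x]) (l₂ := y :: L2)
        simpa [hnewL] using this
      have p2 : (L1 ++ x :: y :: L2).Perm (y :: L0) := by
        have := List.perm_middle (a := y) (l₁ := L1 ++ [x]) (l₂ := L2)
        simpa [hL] using this
      exact p1.trans (p2.cons f)
    have hyL0 : y ∉ L0 := fun hc => hy ((hdom y).mpr hc)
    have hfL0 : f ∉ L0 := fun hc => hf ((hdom f).mpr hc)
    have hndnew : newL.Nodup := by
      refine hperm.nodup_iff.mpr ?_
      simp [List.nodup_cons, hnd, hyL0, hfL0]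
      exact fun hc => hyf hc.symm
    have hsub : List.Sublist L0 newL := by
      rw [hL, hnewL]
      refine List.Sublist.append_left ?_ L1
      exact List.Sublist.cons₂ x (List.Sublist.cons f (List.Sublist.cons y (List.Sublist.refl _)))
    have hbxf : Before newL x f := ⟨L1, f :: y :: L2, rfl, by simp⟩
    have hbxy : Before newL x y := ⟨L1, f :: y :: L2, rfl, by simp⟩
    have hbfy : Before newL f y := ⟨L1 ++ [x], y :: L2, by simp [hnewL], by simp⟩
    refine ⟨by simp [hΓ'], ?_, newL, hndnew, ?_, ?_, ?_, L1 ++ [x], by simp [hnewL, ctail, hL2]⟩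
    · -- target closure
      rintro w B t q hmem
      rcases List.mem_cons.mp hmem with heq | hmem
      · rw [Prod.mk.injEq, Ty.hom.injEq] at heq
        obtain ⟨rfl, rfl, -, hq⟩ := heq
        rw [Tm.var.injEq] at hq
        subst hq
        simp [hΓ']
      rcases List.mem_cons.mp hmem with heq | hmem
      · rw [Prod.mk.injEq] at heq
        obtain ⟨rfl, hA⟩ := heq
        exact hsubset _ (h6 x B t q (hA ▸ hzC))
      · exact hsubset _ (h6 w B t q hmem)
    · -- domain variables
      intro w
      have hmemL : w ∈ newL ↔ w = f ∨ w = y ∨ w ∈ L0 := by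
        rw [hperm.mem_iff]; simp
      simp only [Ctx.domvars, Set.mem_setOf_eq, hΓ'] at *
      constructor
      · rintro ⟨B, hB⟩
        rcases List.mem_cons.mp hB with heq | hB
        · rw [Prod.mk.injEq] at heq
          exact hmemL.mpr (Or.inl heq.1)
        rcases List.mem_cons.mp hB with heq | hB
        · rw [Prod.mk.injEq] at heq
          exact hmemL.mpr (Or.inr (Or.inl heq.1))
        · exact hmemL.mpr (Or.inr (Or.inr ((hdom w).mp ⟨B, hB⟩)))
      · intro hw
        rcases hmemL.mp hw with rfl | rfl | hw
        · exact ⟨_, List.mem_cons_self⟩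
        · exact ⟨A, List.mem_cons.mpr (Or.inr List.mem_cons_self)⟩
        · obtain ⟨B, hB⟩ := (hdom w).mpr hw
          exact ⟨B, by simp [hB]⟩
    · -- steps
      rintro a b ⟨g, D, t, u, hmem, hc⟩
      rcases List.mem_cons.mp hmem with heq | hmem
      · rw [Prod.mk.injEq, Ty.hom.injEq] at heq
        obtain ⟨rfl, rfl, rfl, rfl⟩ := heq
        rcases hc with ⟨ht, rfl⟩ | ⟨rfl, hu⟩
        · rw [Tm.var.injEq] at ht
          subst ht
          exact hbxf
        · rw [Tm.var.injEq] at hu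
          subst hu
          exact hbfy
      rcases List.mem_cons.mp hmem with heq | hmem
      · rw [Prod.mk.injEq] at heq
        obtain ⟨rfl, hA⟩ := heq
        rcases hc with ⟨rfl, rfl⟩ | ⟨rfl, hu⟩
        · -- edge a → y, where A = hom D (var a) u and (x, A) ∈ Γ
          have hax : TriStep Γ a x := ⟨x, D, .var a, u, hA ▸ hzC, Or.inl ⟨rfl, rfl⟩⟩
          exact before_trans hndnew (before_mono hsub (hstep a x hax)) hbxy
        · -- edge y → b where target of A is var b, so L2 = b :: _
          obtain ⟨q, hq⟩ : ∃ q, u = Tm.var q := ⟨b, hu⟩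
          have : L2 = b :: ctail D := by
            rw [hL2, ← hA, hu, ctail]
          exact ⟨L1 ++ [x, f], b :: ctail D, by simp [hnewL, this], by simp⟩
      · exact before_mono hsub (hstep a b ⟨g, D, t, u, hmem, hc⟩)
    · -- chain
      have hmono : ∀ {a b}, Tri Γ a b → Tri Γ' a b := fun h => tri_mono hsubset h
      rw [hL] at hchain
      unfold List.Chain' at hchain ⊢
      rw [List.isChain_append] at hchain ⊢
      obtain ⟨hc1, hc2, hc3⟩ := hchain
      refine ⟨hc1.imp (fun _ _ => hmono), ?_, ?_⟩
      · rw [List.isChain_cons_cons]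
        refine ⟨Relation.TransGen.single ⟨f, A, .var x, .var y,
          by simp [hΓ'], Or.inl ⟨rfl, rfl⟩⟩, ?_⟩
        rw [List.isChain_cons_cons]
        refine ⟨Relation.TransGen.single ⟨f, A, .var x, .var y,
          by simp [hΓ'], Or.inr ⟨rfl, rfl⟩⟩, ?_⟩
        cases hL2' : L2 with
        | nil => simp
        | cons q L2' =>
          rw [List.isChain_cons_cons]
          constructor
          · -- Tri Γ' y q, since ctail A = q :: L2' forces A = hom B t (var q)
            have : ∃ B t, A = Ty.hom B t (.var q) := by
              cases A with
              | obj => simp [ctail, hL2] at hL2'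
              | hom B t u =>
                cases u with
                | var q' =>
                  rw [hL2, ctail, List.cons.injEq] at hL2'
                  exact ⟨B, t, by rw [hL2'.1]⟩
                | cohop a b c => simp [ctail, hL2] at hL2'
                | coh a b c => simp [ctail, hL2] at hL2'
            obtain ⟨B, t, rfl⟩ := this
            exact Relation.TransGen.single ⟨y, B, t, .var q, by simp [hΓ'], Or.inr ⟨rfl, rfl⟩⟩
          · have := (List.isChain_cons_cons.mp (hL2' ▸ hc2)).2
            exact this.imp (fun _ _ => hmono)
      · intro p hp q hq
        simp at hq
        subst hq
        exact hmono (hc3 p hp x (by simp))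
  | @psd Γ g B x y hps ih =>
    obtain ⟨hzC, h6, L0, hnd, hdom, hstep, hchain, L1, hL⟩ := ih
    refine ⟨h6 g B (.var x) y hzC, h6, L0, hnd, hdom, hstep, hchain, L1 ++ [g], ?_⟩
    rw [hL, ctail]
    simp

end CaTT

open CaTT in
/-- For every ps-context `Γ`, the globular set of variables of `Γ` is `◁`-linear:
any two distinct variables are comparable for `◁` and no variable satisfies `x ◁ x`. -/
theorem ps_context_is_linear (Γ : Ctx) (hΓ : PsDer Γ) :
    (∀ a b : ℕ, a ∈ Ctx.domvars Γ → b ∈ Ctx.domvars Γ → a ≠ b → Tri Γ a b ∨ Tri Γ b a) ∧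
    (∀ x : ℕ, ¬ Tri Γ x x) := by
  obtain ⟨x0, hx0⟩ := hΓ
  obtain ⟨-, -, L, hnd, hdom, hstep, hchain, -⟩ := psVar_inv hx0
  have key : ∀ a b, Tri Γ a b → Before L a b := by
    intro a b h
    induction h with
    | single h => exact hstep _ _ h
    | tail _ h ih => exact before_trans hnd ih (hstep _ _ h)
  have back : ∀ a b, Before L a b → Tri Γ a b := fun a b hb =>
    before_of_chain' (Q := Tri Γ) (fun h1 h2 => Relation.TransGen.trans h1 h2) hchain hb
  constructor
  · intro a b ha hb hne
    rcases before_total ((hdom a).mp ha) ((hdom b).mp hb) hne with h | h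
    · exact Or.inl (back _ _ h)
    · exact Or.inr (back _ _ h)
  · intro x hx
    exact before_irrefl hnd x (key _ _ hx)
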